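/- Lemma (per-iteration merit and distance bounds for OptDE): Suppose Assumptions 1 and 2 hold and run the OptDE algorithm (with parameter σ ≥ 0). Then for every k ∈ [K] and every D > 0, sup{ ⟨F(w_k), w_k − w⟩ : w ∈ 𝒲, ‖w_k − w‖ ≤ D } ≤ (1 + δ/(αγ)) D L ( ‖w_k − z_{k−1}‖ + ‖z_{k−1} − w_{k−1}‖ ). Moreover, if in addition Assumption 4 holds with σ > 0 and w* is its σ-weak solution, then ‖w_k − w*‖ ≤ (1 + δ/(αγ)) (L/σ) ( ‖w_k − z_{k−1}‖ + ‖z_{k−1} − w_{k−1}‖ ). -/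

import Mathlib

open scoped RealInnerProductSpace
open Finset MeasureTheory

/-- `Vec d` is the ambient space `ℝ^d` with its standard inner product. -/
abbrev Vec (d : ℕ) := EuclideanSpace ℝ (Fin d)

/-- The dual norm `‖y‖_* = sup_{nrm x ≤ 1} ⟪x, y⟫` of a (general) norm `nrm` on `ℝ^d`. -/
noncomputable def dualNorm {d : ℕ} (nrm : Vec d → ℝ) (y : Vec d) : ℝ :=
  sSup ((fun x => (⟪x, y⟫ : ℝ)) '' {x | nrm x ≤ 1})

/-- The Bregman divergence `V_v(w) = ½‖w‖² − ½‖v‖² − ⟪∇½‖v‖², w − v⟫` of `½ nrm²`,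
where `g` is the gradient map of `½ nrm²`. -/
noncomputable def breg {d : ℕ} (nrm : Vec d → ℝ) (g : Vec d → Vec d) (v w : Vec d) : ℝ :=
  nrm w ^ 2 / 2 - nrm v ^ 2 / 2 - ⟪g v, w - v⟫

section aux
variable {d : ℕ} {nrm : Vec d → ℝ}
  (hpos : ∀ x : Vec d, x ≠ 0 → 0 < nrm x)
  (hadd : ∀ x y : Vec d, nrm (x + y) ≤ nrm x + nrm y)
  (hsmul : ∀ (c : ℝ) (x : Vec d), nrm (c • x) = |c| * nrm x)

include hsmul in
lemma nrm_zero : nrm 0 = 0 := by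
  have := hsmul 0 0; simpa using this

include hadd hsmul in
lemma nrm_nonneg : ∀ x : Vec d, 0 ≤ nrm x := by
  intro x
  have h1 : nrm (-x) = nrm x := by
    have := hsmul (-1) x; simpa using this
  have h2 : nrm (x + -x) ≤ nrm x + nrm (-x) := hadd x (-x)
  rw [add_neg_cancel, nrm_zero hsmul, h1] at h2
  linarith

include hsmul in
lemma nrm_neg (x : Vec d) : nrm (-x) = nrm x := by
  have := hsmul (-1) x; simpa using this

include hadd hsmul in
lemma nrm_le_const (x : Vec d) :
    nrm x ≤ (∑ i : Fin d, nrm (EuclideanSpace.single i (1:ℝ))) * ‖x‖ := by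
  have hx : x = ∑ i : Fin d, x i • EuclideanSpace.single i (1:ℝ) := by
    ext j
    rw [WithLp.ofLp_sum, Finset.sum_apply]
    simp [EuclideanSpace.single_apply]
  have hsum : ∀ (s : Finset (Fin d)) (f : Fin d → Vec d),
      nrm (∑ i ∈ s, f i) ≤ ∑ i ∈ s, nrm (f i) := by
    intro s
    induction s using Finset.induction with
    | empty => intro f; simp [nrm_zero hsmul]
    | insert _ _ hni ih =>
      intro f
      rw [Finset.sum_insert hni, Finset.sum_insert hni]
      exact le_trans (hadd _ _) (by linarith [ih f])
  calc nrm x ≤ ∑ i : Fin d, nrm (x i • EuclideanSpace.single i (1:ℝ)) := by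
        conv_lhs => rw [hx]
        exact hsum _ _
    _ ≤ ∑ i : Fin d, nrm (EuclideanSpace.single i (1:ℝ)) * ‖x‖ := by
        apply Finset.sum_le_sum
        intro i _
        rw [hsmul]
        have hxi : |x i| ≤ ‖x‖ := by
          have := abs_real_inner_le_norm (EuclideanSpace.single i (1:ℝ)) x
          rw [EuclideanSpace.inner_single_left, EuclideanSpace.norm_single] at this
          simpa using this
        have hn := nrm_nonneg hadd hsmul (EuclideanSpace.single i (1:ℝ))
        calc |x i| * nrm _ ≤ ‖x‖ * nrm _ := by
              exact mul_le_mul_of_nonneg_right hxi hn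
          _ = _ := mul_comm _ _
    _ = _ := by rw [← Finset.sum_mul]

end aux

section aux2
variable {d : ℕ} {nrm : Vec d → ℝ}
  (hpos : ∀ x : Vec d, x ≠ 0 → 0 < nrm x)
  (hadd : ∀ x y : Vec d, nrm (x + y) ≤ nrm x + nrm y)
  (hsmul : ∀ (c : ℝ) (x : Vec d), nrm (c • x) = |c| * nrm x)

include hpos hadd hsmul in
lemma nrm_lower (hne : ∃ x : Vec d, x ≠ 0) :
    ∃ m : ℝ, 0 < m ∧ ∀ x : Vec d, m * ‖x‖ ≤ nrm x := by
  -- nrm is continuous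
  set C := ∑ i : Fin d, nrm (EuclideanSpace.single i (1:ℝ)) with hC
  have hCn : 0 ≤ C := Finset.sum_nonneg fun i _ => nrm_nonneg hadd hsmul _
  have hlip : ∀ x y : Vec d, dist (nrm x) (nrm y) ≤ C * dist x y := by
    intro x y
    have h1 : nrm x ≤ nrm y + nrm (x - y) := by
      have := hadd (x - y) y; simpa [sub_add_cancel, add_comm] using this
    have h2 : nrm y ≤ nrm x + nrm (x - y) := by
      have := hadd (y - x) x
      have hn : nrm (y - x) = nrm (x - y) := by
        rw [show y - x = -(x - y) by abel, nrm_neg hsmul]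
      rw [hn] at this
      simpa [sub_add_cancel, add_comm] using this
    have h3 : nrm (x - y) ≤ C * ‖x - y‖ := nrm_le_const hadd hsmul _
    rw [Real.dist_eq, dist_eq_norm]
    rw [abs_sub_le_iff]
    constructor <;> linarith
  have hcont : Continuous nrm :=
    (LipschitzWith.of_dist_le_mul (K := ⟨C, hCn⟩) (by exact_mod_cast hlip)).continuous
  -- sphere is compact and nonempty
  obtain ⟨x₀, hx₀⟩ := hne
  have hsph : (Metric.sphere (0:Vec d) 1).Nonempty := by
    refine ⟨‖x₀‖⁻¹ • x₀, ?_⟩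
    simp [norm_smul, abs_inv, inv_mul_cancel₀ (norm_ne_zero_iff.mpr hx₀), abs_of_nonneg (norm_nonneg x₀)]
  obtain ⟨y₀, hy₀mem, hy₀min⟩ :=
    (isCompact_sphere (0:Vec d) 1).exists_isMinOn hsph hcont.continuousOn
  have hy₀ : ‖y₀‖ = 1 := by simpa using hy₀mem
  have hy₀ne : y₀ ≠ 0 := by intro h; rw [h] at hy₀; simp at hy₀
  refine ⟨nrm y₀, hpos _ hy₀ne, ?_⟩
  intro x
  rcases eq_or_ne x 0 with rfl | hx
  · simp [nrm_zero hsmul]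
  · have hmem : ‖x‖⁻¹ • x ∈ Metric.sphere (0:Vec d) 1 := by
      simp [norm_smul, abs_inv, inv_mul_cancel₀ (norm_ne_zero_iff.mpr hx), abs_of_nonneg (norm_nonneg x)]
    have : nrm y₀ ≤ nrm (‖x‖⁻¹ • x) := hy₀min hmem
    have hxpos : (0:ℝ) < ‖x‖ := norm_pos_iff.mpr hx
    have h2 : nrm (‖x‖⁻¹ • x) = ‖x‖⁻¹ * nrm x := by
      rw [hsmul, abs_inv, abs_of_nonneg (norm_nonneg x)]
    rw [h2] at this
    -- this : nrm y₀ ≤ ‖x‖⁻¹ * nrm x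
    calc nrm y₀ * ‖x‖ ≤ (‖x‖⁻¹ * nrm x) * ‖x‖ :=
          mul_le_mul_of_nonneg_right this (norm_nonneg x)
      _ = nrm x := by field_simp

include hpos hadd hsmul in
lemma pairing (u y : Vec d) : (⟪u, y⟫ : ℝ) ≤ nrm u * dualNorm nrm y := by
  rcases eq_or_ne u 0 with rfl | hu
  · simp [nrm_zero hsmul]
  · obtain ⟨m, hm, hml⟩ := nrm_lower hpos hadd hsmul ⟨u, hu⟩
    have hbdd : BddAbove ((fun x => (⟪x, y⟫ : ℝ)) '' {x | nrm x ≤ 1}) := by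
      refine ⟨‖y‖ / m, ?_⟩
      rintro r ⟨x, hx, rfl⟩
      have h1 : m * ‖x‖ ≤ 1 := le_trans (hml x) hx
      have h2 : ‖x‖ ≤ 1 / m := by rw [le_div_iff₀ hm]; linarith [mul_comm m ‖x‖]
      calc (⟪x, y⟫ : ℝ) ≤ ‖x‖ * ‖y‖ := real_inner_le_norm x y
        _ ≤ (1 / m) * ‖y‖ := mul_le_mul_of_nonneg_right h2 (norm_nonneg y)
        _ = ‖y‖ / m := by ring
    have hupos : 0 < nrm u := hpos u hu
    have hmem : (nrm u)⁻¹ • u ∈ {x : Vec d | nrm x ≤ 1} := by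
      simp only [Set.mem_setOf_eq]
      rw [hsmul, abs_inv, abs_of_pos hupos, inv_mul_cancel₀ (ne_of_gt hupos)]
    have hle : (⟪(nrm u)⁻¹ • u, y⟫ : ℝ) ≤ dualNorm nrm y :=
      le_csSup hbdd ⟨_, hmem, rfl⟩
    rw [real_inner_smul_left] at hle
    calc (⟪u, y⟫ : ℝ) = nrm u * ((nrm u)⁻¹ * ⟪u, y⟫) := by field_simp
      _ ≤ nrm u * dualNorm nrm y := mul_le_mul_of_nonneg_left hle (le_of_lt hupos)

end aux2

section vi
variable {d : ℕ} {nrm : Vec d → ℝ} {g : Vec d → Vec d} {γ δ : ℝ} {W : Set (Vec d)}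

lemma vi_bound
    (hpos : ∀ x : Vec d, x ≠ 0 → 0 < nrm x)
    (hadd : ∀ x y : Vec d, nrm (x + y) ≤ nrm x + nrm y)
    (hsmul : ∀ (c : ℝ) (x : Vec d), nrm (c • x) = |c| * nrm x)
    (hγ0 : 0 < γ) (hδ : 0 ≤ δ)
    (hgbound : ∀ x : Vec d, dualNorm nrm (g x) ≤ δ * nrm x)
    (hstrong : ∀ v x : Vec d,
      nrm v ^ 2 / 2 + ⟪g v, x - v⟫ + γ / 2 * nrm (x - v) ^ 2 ≤ nrm x ^ 2 / 2)
    (hWcv : Convex ℝ W) (c zz wk : Vec d) (hwkW : wk ∈ W)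
    (hmin : IsMinOn (fun x => (⟪c, x⟫ : ℝ) + 1 / (2 * γ) * nrm (x - zz) ^ 2) W wk)
    (v : Vec d) (hv : v ∈ W) :
    (⟪c, wk - v⟫ : ℝ) ≤ δ / γ * nrm (v - wk) * nrm (wk - zz) := by
  set s := v - wk with hs
  set u := wk - zz with hu
  have key : ∀ t : ℝ, 0 < t → t ≤ 1 →
      (⟪c, wk - v⟫ : ℝ) ≤ δ / γ * nrm s * nrm u + t * (δ / γ * nrm s ^ 2) := by
    intro t ht0 ht1
    have hxtW : wk + t • s ∈ W := by
      have h := hWcv hwkW hv (by linarith : (0:ℝ) ≤ 1 - t) (le_of_lt ht0) (by ring)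
      have : (1 - t) • wk + t • v = wk + t • s := by
        rw [hs]; rw [smul_sub, sub_smul, one_smul]; abel
      rwa [this] at h
    have hφ := hmin hxtW
    simp only [Set.mem_setOf_eq] at hφ
    have hlin : (⟪c, wk + t • s⟫ : ℝ) = ⟪c, wk⟫ + t * ⟪c, s⟫ := by
      rw [inner_add_right, real_inner_smul_right]
    have heq : wk + t • s - zz = u + t • s := by rw [hu]; abel
    rw [hlin, heq] at hφ
    -- hφ : ⟪c,wk⟫ + 1/(2γ) nrm u ^2 ≤ ⟪c,wk⟫ + t⟪c,s⟫ + 1/(2γ) nrm (u+t•s)^2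
    have hsc := hstrong (u + t • s) u
    have h1 : (⟪g (u + t • s), u - (u + t • s)⟫ : ℝ) = -(t * ⟪g (u + t • s), s⟫) := by
      have : u - (u + t • s) = -(t • s) := by abel
      rw [this, inner_neg_right, real_inner_smul_right]
    rw [h1] at hsc
    have hγq : 0 ≤ γ / 2 * nrm (u - (u + t • s)) ^ 2 := by
      positivity
    -- so nrm(u+ts)^2/2 - nrm u^2/2 ≤ t⟪g(u+ts),s⟫
    have h2 : nrm (u + t • s) ^ 2 / 2 - nrm u ^ 2 / 2 ≤ t * ⟪g (u + t • s), s⟫ := by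
      nlinarith [hγq]
    -- combine: 0 ≤ t⟪c,s⟫ + 1/(2γ)(nrm(u+ts)^2 - nrm u^2)
    have h3 : 0 ≤ t * ⟪c, s⟫ + 1 / (2 * γ) * (nrm (u + t • s) ^ 2 - nrm u ^ 2) := by
      nlinarith [hφ]
    have h4 : 1 / (2 * γ) * (nrm (u + t • s) ^ 2 - nrm u ^ 2) ≤
        (1 / γ) * (t * ⟪g (u + t • s), s⟫) := by
      have hX : nrm (u + t • s) ^ 2 - nrm u ^ 2 ≤ 2 * (t * ⟪g (u + t • s), s⟫) := by
        linarith
      calc 1 / (2 * γ) * (nrm (u + t • s) ^ 2 - nrm u ^ 2)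
          ≤ 1 / (2 * γ) * (2 * (t * ⟪g (u + t • s), s⟫)) :=
            mul_le_mul_of_nonneg_left hX (by positivity)
        _ = (1 / γ) * (t * ⟪g (u + t • s), s⟫) := by
            field_simp
    have h5 : 0 ≤ ⟪c, s⟫ + (1 / γ) * ⟪g (u + t • s), s⟫ := by
      have := add_le_add_left h4 (t * ⟪c, s⟫)
      have h6 : 0 ≤ t * ⟪c, s⟫ + (1 / γ) * (t * ⟪g (u + t • s), s⟫) := le_trans h3 (by linarith)
      have h7 : t * ⟪c, s⟫ + (1 / γ) * (t * ⟪g (u + t • s), s⟫)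
          = t * (⟪c, s⟫ + (1 / γ) * ⟪g (u + t • s), s⟫) := by ring
      rw [h7] at h6
      exact nonneg_of_mul_nonneg_right h6 ht0
    have hgs : (⟪g (u + t • s), s⟫ : ℝ) ≤ nrm s * (δ * (nrm u + t * nrm s)) := by
      have hp := pairing hpos hadd hsmul s (g (u + t • s))
      rw [real_inner_comm]
      refine le_trans hp ?_
      have hb := hgbound (u + t • s)
      have hn : nrm (u + t • s) ≤ nrm u + t * nrm s := by
        refine le_trans (hadd u (t • s)) ?_
        rw [hsmul, abs_of_pos ht0]
      have hsn := nrm_nonneg hadd hsmul s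
      have : dualNorm nrm (g (u + t • s)) ≤ δ * (nrm u + t * nrm s) := by
        refine le_trans hb ?_
        exact mul_le_mul_of_nonneg_left hn hδ
      exact mul_le_mul_of_nonneg_left this hsn
    have hcs : (⟪c, wk - v⟫ : ℝ) = -⟪c, s⟫ := by
      rw [hs, show wk - v = -(v - wk) by abel, inner_neg_right]
    rw [hcs]
    have h8 : -⟪c, s⟫ ≤ (1 / γ) * ⟪g (u + t • s), s⟫ := by linarith
    refine le_trans h8 ?_
    have h9 : (1 / γ) * ⟪g (u + t • s), s⟫ ≤ (1 / γ) * (nrm s * (δ * (nrm u + t * nrm s))) := by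
      apply mul_le_mul_of_nonneg_left hgs
      positivity
    refine le_trans h9 (le_of_eq ?_)
    ring
  refine le_of_forall_pos_le_add ?_
  intro ε hε
  set B := δ / γ * nrm s ^ 2 with hB
  have hBn : 0 ≤ B := by
    have := nrm_nonneg hadd hsmul s
    positivity
  set t := min 1 (ε / (B + 1)) with htdef
  have ht0 : 0 < t := lt_min one_pos (by positivity)
  have ht1 : t ≤ 1 := min_le_left _ _
  have := key t ht0 ht1
  have htB : t * B ≤ ε := by
    have h1 : t ≤ ε / (B + 1) := min_le_right _ _
    have h2 : t * B ≤ (ε / (B + 1)) * B := mul_le_mul_of_nonneg_right h1 hBn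
    have h3 : (ε / (B + 1)) * B ≤ ε := by
      rw [div_mul_eq_mul_div, div_le_iff₀ (by linarith : (0:ℝ) < B + 1)]
      nlinarith
    linarith
  linarith

end vi

/-- **Lemma (per-iteration merit and distance bounds for OptDE).**
Under Assumptions 1 and 2, running OptDE with parameter `σ ≥ 0`, for every `k ∈ [K]`
and `D > 0`,
`sup{⟪F(w_k), w_k − v⟫ : v ∈ W, ‖w_k − v‖ ≤ D}
  ≤ (1 + δ/(αγ)) D L (‖w_k − z_{k−1}‖ + ‖z_{k−1} − w_{k−1}‖)`;
moreover, if `σ > 0` and Assumption 4 holds with σ-weak solution `w*`, then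
`‖w_k − w*‖ ≤ (1 + δ/(αγ)) (L/σ) (‖w_k − z_{k−1}‖ + ‖z_{k−1} − w_{k−1}‖)`. -/
theorem optde_per_iteration_bounds
    {d : ℕ} (W : Set (Vec d)) (hWne : W.Nonempty) (hWcl : IsClosed W) (hWcv : Convex ℝ W)
    (F : Vec d → Vec d) (nrm : Vec d → ℝ) (g : Vec d → Vec d)
    (L γ δ α σ : ℝ)
    -- `nrm` is a norm on ℝ^d
    (hnrm_pos : ∀ x : Vec d, x ≠ 0 → 0 < nrm x)
    (hnrm_add : ∀ x y : Vec d, nrm (x + y) ≤ nrm x + nrm y)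
    (hnrm_smul : ∀ (c : ℝ) (x : Vec d), nrm (c • x) = |c| * nrm x)
    (hL : 0 < L) (hγ0 : 0 < γ) (hγ1 : γ ≤ 1) (hδ : 0 < δ) (hσ : 0 ≤ σ)
    -- Assumption 1
    (hLip : ∀ v ∈ W, ∀ u ∈ W, dualNorm nrm (F v - F u) ≤ L * nrm (v - u))
    -- Assumption 2
    (hgrad : ∀ x : Vec d, HasGradientAt (fun v : Vec d => nrm v ^ 2 / 2) (g x) x)
    (hstrong : ∀ v x : Vec d,
      nrm v ^ 2 / 2 + ⟪g v, x - v⟫ + γ / 2 * nrm (x - v) ^ 2 ≤ nrm x ^ 2 / 2)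
    (hgbound : ∀ x : Vec d, dualNorm nrm (g x) ≤ δ * nrm x)
    -- OptDE algorithm with parameter σ
    (hα0 : 0 < α)
    (hαle : α ≤ min (1 / (4 * Real.sqrt 2)) (Real.sqrt 3 / (4 * Real.sqrt γ)))
    (a A : ℕ → ℝ) (hA0 : A 0 = 0)
    (ha : ∀ k, 1 ≤ k → a k = α * γ * (1 + σ * A (k - 1)) / L)
    (hArec : ∀ k, 1 ≤ k → A k = A (k - 1) + a k)
    (w z : ℕ → Vec d) (hw0W : w 0 ∈ W) (hz0 : z 0 = w 0)
    (hwk : ∀ k, 1 ≤ k → w k ∈ W ∧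
      IsMinOn (fun x => (⟪(α / L) • F (w (k - 1)), x⟫ : ℝ) +
        1 / (2 * γ) * nrm (x - z (k - 1)) ^ 2) W (w k))
    (hzk : ∀ k, 1 ≤ k → z k ∈ W ∧
      IsMinOn (fun x =>
        (⟪∑ i ∈ Finset.Icc 1 k, a i • (F (w i) - (σ / γ) • g (w i - w 0)), x⟫ : ℝ) +
        (1 + σ * A k) / (2 * γ) * nrm (x - w 0) ^ 2) W (z k))
    (K : ℕ) (hK : 1 ≤ K)
    (wstar : Vec d) (hwsW : wstar ∈ W) :
    ∀ k ∈ Finset.Icc 1 K,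
      (∀ D : ℝ, 0 < D → ∀ v ∈ W, nrm (w k - v) ≤ D →
        (⟪F (w k), w k - v⟫ : ℝ) ≤
          (1 + δ / (α * γ)) * D * L *
            (nrm (w k - z (k - 1)) + nrm (z (k - 1) - w (k - 1)))) ∧
      (0 < σ →
        (∀ v ∈ W,
          σ / γ * (breg nrm g (v - w 0) (wstar - w 0) + breg nrm g (wstar - w 0) (v - w 0)) ≤
            (⟪F v, v - wstar⟫ : ℝ)) →
        nrm (w k - wstar) ≤
          (1 + δ / (α * γ)) * (L / σ) *
            (nrm (w k - z (k - 1)) + nrm (z (k - 1) - w (k - 1)))) := by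
  
  intro k hk
  rw [Finset.mem_Icc] at hk
  obtain ⟨hk1, hkK⟩ := hk
  obtain ⟨hwkW, hmin⟩ := hwk k hk1
  have hwprevW : w (k - 1) ∈ W := by
    rcases Nat.lt_or_ge (k - 1) 1 with h | h
    · interval_cases h' : (k - 1) <;> simp_all
    · exact (hwk (k - 1) h).1
  have hnn := nrm_nonneg hnrm_add hnrm_smul
  have hS : nrm (w k - w (k - 1)) ≤ nrm (w k - z (k - 1)) + nrm (z (k - 1) - w (k - 1)) := by
    have := hnrm_add (w k - z (k - 1)) (z (k - 1) - w (k - 1))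
    have he : w k - z (k - 1) + (z (k - 1) - w (k - 1)) = w k - w (k - 1) := by abel
    rwa [he] at this
  set S := nrm (w k - z (k - 1)) + nrm (z (k - 1) - w (k - 1)) with hSdef
  have hSnn : 0 ≤ S := add_nonneg (hnn _) (hnn _)
  have hzS : nrm (w k - z (k - 1)) ≤ S := le_add_of_nonneg_right (hnn _)
  clear_value S
  have partA : ∀ D : ℝ, 0 < D → ∀ v ∈ W, nrm (w k - v) ≤ D →
      (⟪F (w k), w k - v⟫ : ℝ) ≤ (1 + δ / (α * γ)) * D * L * S := by
    intro D hD v hvW hvD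
    have hvi := vi_bound hnrm_pos hnrm_add hnrm_smul hγ0 (le_of_lt hδ) hgbound hstrong
      hWcv ((α / L) • F (w (k - 1))) (z (k - 1)) (w k) hwkW hmin v hvW
    rw [real_inner_smul_left] at hvi
    -- hvi : (α/L) * ⟪F (w (k-1)), w k - v⟫ ≤ δ/γ * nrm (v - w k) * nrm (w k - z (k-1))
    have hnvw : nrm (v - w k) = nrm (w k - v) := by
      rw [show v - w k = -(w k - v) by abel, nrm_neg hnrm_smul]
    rw [hnvw] at hvi
    have hαL : 0 < α / L := div_pos hα0 hL
    have hprev : (⟪F (w (k - 1)), w k - v⟫ : ℝ) ≤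
        (L / α) * (δ / γ * nrm (w k - v) * nrm (w k - z (k - 1))) := by
      have hLα : (0:ℝ) ≤ L / α := le_of_lt (div_pos hL hα0)
      have h := mul_le_mul_of_nonneg_left hvi hLα
      have he : (L / α) * (α / L * ⟪F (w (k - 1)), w k - v⟫) = ⟪F (w (k - 1)), w k - v⟫ := by
        field_simp
      rwa [he] at h
    have hdiff : (⟪F (w k) - F (w (k - 1)), w k - v⟫ : ℝ) ≤
        nrm (w k - v) * (L * nrm (w k - w (k - 1))) := by
      have hp := pairing hnrm_pos hnrm_add hnrm_smul (w k - v) (F (w k) - F (w (k - 1)))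
      have hlip := hLip (w k) hwkW (w (k - 1)) hwprevW
      rw [real_inner_comm]
      exact le_trans hp (mul_le_mul_of_nonneg_left hlip (hnn _))
    have hsplit : (⟪F (w k), w k - v⟫ : ℝ)
        = ⟪F (w k) - F (w (k - 1)), w k - v⟫ + ⟪F (w (k - 1)), w k - v⟫ := by
      rw [← inner_add_left]
      congr 1
      abel
    rw [hsplit]
    have hb1 : nrm (w k - v) * (L * nrm (w k - w (k - 1))) ≤ D * (L * S) := by
      have h1 : nrm (w k - v) * (L * nrm (w k - w (k - 1))) ≤ D * (L * nrm (w k - w (k - 1))) :=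
        mul_le_mul_of_nonneg_right hvD (mul_nonneg (le_of_lt hL) (hnn _))
      have h2 : D * (L * nrm (w k - w (k - 1))) ≤ D * (L * S) := by
        apply mul_le_mul_of_nonneg_left _ (le_of_lt hD)
        exact mul_le_mul_of_nonneg_left hS (le_of_lt hL)
      linarith
    have hb2 : (L / α) * (δ / γ * nrm (w k - v) * nrm (w k - z (k - 1)))
        ≤ (δ / (α * γ)) * D * L * S := by
      have h1 : δ / γ * nrm (w k - v) * nrm (w k - z (k - 1)) ≤ δ / γ * D * S := by
        have hA : 0 ≤ δ / γ := le_of_lt (div_pos hδ hγ0)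
        have := mul_le_mul (mul_le_mul_of_nonneg_left hvD hA) hzS (hnn _)
          (mul_nonneg hA (le_of_lt hD))
        linarith
      have h2 : (L / α) * (δ / γ * nrm (w k - v) * nrm (w k - z (k - 1)))
          ≤ (L / α) * (δ / γ * D * S) :=
        mul_le_mul_of_nonneg_left h1 (le_of_lt (div_pos hL hα0))
      have h3 : (L / α) * (δ / γ * D * S) = (δ / (α * γ)) * D * L * S := by
        field_simp
      linarith
    have : (1 + δ / (α * γ)) * D * L * S = D * (L * S) + (δ / (α * γ)) * D * L * S := by
      ring
    rw [this]
    exact add_le_add (le_trans hdiff hb1) (le_trans hprev hb2)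
  refine ⟨partA, ?_⟩
  intro hσpos h4
  have hb := h4 (w k) hwkW
  have hbreg : ∀ a b : Vec d, γ / 2 * nrm (b - a) ^ 2 ≤ breg nrm g a b := by
    intro a b
    have := hstrong a b
    unfold breg
    linarith
  set D := nrm (w k - wstar) with hDdef
  have hDnn : 0 ≤ D := hnn _
  clear_value D
  have hkey : σ * D ^ 2 ≤ (⟪F (w k), w k - wstar⟫ : ℝ) := by
    have h1 := hbreg (w k - w 0) (wstar - w 0)
    have h2 := hbreg (wstar - w 0) (w k - w 0)
    have he1 : wstar - w 0 - (w k - w 0) = -(w k - wstar) := by abel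
    have he2 : w k - w 0 - (wstar - w 0) = w k - wstar := by abel
    rw [he1, nrm_neg hnrm_smul] at h1
    rw [he2] at h2
    have hsum : σ / γ * (γ * D ^ 2) ≤
        σ / γ * (breg nrm g (w k - w 0) (wstar - w 0) + breg nrm g (wstar - w 0) (w k - w 0)) := by
      apply mul_le_mul_of_nonneg_left _ (by positivity)
      rw [hDdef]
      linarith
    have heq : σ / γ * (γ * D ^ 2) = σ * D ^ 2 := by
      field_simp
    rw [heq] at hsum
    exact le_trans hsum hb
  have hCpos : (0:ℝ) ≤ 1 + δ / (α * γ) := by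
    have : 0 ≤ δ / (α * γ) := le_of_lt (div_pos hδ (mul_pos hα0 hγ0))
    linarith
  rcases eq_or_lt_of_le hDnn with hD0 | hDpos
  · have hC : 0 ≤ (1 + δ / (α * γ)) * (L / σ) * S :=
      mul_nonneg (mul_nonneg hCpos (le_of_lt (div_pos hL hσpos))) hSnn
    linarith [hC]
  · have hA := partA D hDpos wstar hwsW hDdef.ge
    have htrans : σ * D ^ 2 ≤ (1 + δ / (α * γ)) * D * L * S := le_trans hkey hA
    have hσD : σ * D * D ≤ ((1 + δ / (α * γ)) * L * S) * D := by
      calc σ * D * D = σ * D ^ 2 := by ring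
        _ ≤ (1 + δ / (α * γ)) * D * L * S := htrans
        _ = ((1 + δ / (α * γ)) * L * S) * D := by ring
    have h5 : σ * D ≤ (1 + δ / (α * γ)) * L * S := le_of_mul_le_mul_right hσD hDpos
    rw [show (1 + δ / (α * γ)) * (L / σ) * S = ((1 + δ / (α * γ)) * L * S) / σ by ring]
    rw [le_div_iff₀ hσpos]
    linarith [h5]
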